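/- Let G be a graph with minimum degree at least 2 and feedback edge set F of size k, and let C be the union of endpoints of F and the vertices of degree ≥ 3 in the forest T = (V(G), E(G)\F). Then |C| ≤ 4k, and the forest T decomposes into at most 4k edge-disjoint paths whose endpoints lie in C and whose internal vertices have degree 2 in T and lie outside C. -/

import Mathlib

open SimpleGraph Finset

namespace ForestDecomp

set_option linter.unusedSectionVars false
variable {V : Type*} [Fintype V] [DecidableEq V] {T : SimpleGraph V}

lemma mem_support_of_mem_edges {u w x : V} (q : T.Walk u w) {e : Sym2 V}
    (he : e ∈ q.edges) (hx : x ∈ e) : x ∈ q.support := by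
  obtain ⟨y, rfl⟩ := Sym2.mem_iff_exists.1 hx
  exact q.fst_mem_support_of_mem_edges he

lemma edge_eq_of_head {u w v1 : V} (h : T.Adj u v1) (q : T.Walk v1 w)
    (hq : (Walk.cons h q).IsPath) {e : Sym2 V} (he : e ∈ (Walk.cons h q).edges)
    (hu : u ∈ e) : e = s(u, v1) := by
  rw [Walk.edges_cons, List.mem_cons] at he
  rcases he with rfl | he
  · rfl
  · exact absurd (mem_support_of_mem_edges q he hu) ((Walk.cons_isPath_iff h q).1 hq).2

lemma inc_head {u w : V} (q : T.Walk u w) (hq : q.IsPath) (hl : 0 < q.length) :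
    ((q.edges.toFinset.filter (fun e => u ∈ e))).card = 1 := by
  cases q with
  | nil => simp at hl
  | @cons u v1 w h q' =>
    rw [Finset.card_eq_one]
    refine ⟨s(u, v1), ?_⟩
    ext e
    simp only [Finset.mem_filter, List.mem_toFinset, Finset.mem_singleton]
    constructor
    · rintro ⟨he, hu⟩; exact edge_eq_of_head h q' hq he hu
    · rintro rfl
      exact ⟨by simp, by simp⟩

lemma inc_tail {u w : V} (q : T.Walk u w) (hq : q.IsPath) (hl : 0 < q.length) :
    ((q.edges.toFinset.filter (fun e => w ∈ e))).card = 1 := by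
  have : q.reverse.edges.toFinset = q.edges.toFinset := by
    rw [Walk.edges_reverse, List.toFinset_reverse]
  rw [← this]
  exact inc_head q.reverse hq.reverse (by rwa [Walk.length_reverse])

lemma inc_not_mem {u w x : V} (q : T.Walk u w) (hx : x ∉ q.support) :
    ((q.edges.toFinset.filter (fun e => x ∈ e))).card = 0 := by
  rw [Finset.card_eq_zero, Finset.eq_empty_iff_forall_notMem]
  rintro e he
  simp only [Finset.mem_filter, List.mem_toFinset] at he
  exact hx (mem_support_of_mem_edges q he.1 he.2)

lemma inc_internal {u w : V} (q : T.Walk u w) (hq : q.IsPath) {x : V}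
    (hx : x ∈ q.support) (hxu : x ≠ u) (hxw : x ≠ w) :
    ((q.edges.toFinset.filter (fun e => x ∈ e))).card = 2 := by
  induction q with
  | nil => simp at hx; exact absurd hx hxu
  | @cons u v1 w h q' ih =>
    rw [Walk.support_cons, List.mem_cons] at hx
    rcases hx with rfl | hx
    · exact absurd rfl hxu
    rw [Walk.cons_isPath_iff] at hq
    have hedges : (Walk.cons h q').edges.toFinset = insert s(u, v1) q'.edges.toFinset := by
      rw [Walk.edges_cons, List.toFinset_cons]
    by_cases hxv : x = v1
    · subst hxv
      have hnotin : s(u, x) ∉ q'.edges.toFinset := by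
        intro hmem
        exact hq.2 (mem_support_of_mem_edges q' (List.mem_toFinset.1 hmem) (by simp))
      have hlq : 0 < q'.length := by
        cases q' with
        | nil => exact absurd rfl hxw
        | cons h'' q'' => simp
      rw [hedges, Finset.filter_insert, if_pos (by simp)]
      rw [Finset.card_insert_of_notMem (fun hc => hnotin (Finset.mem_of_mem_filter _ hc)),
        inc_head q' hq.1 hlq]
    · rw [hedges, Finset.filter_insert, if_neg (by simp [Sym2.mem_iff]; exact ⟨hxu, hxv⟩)]
      exact ih hq.1 hx hxv hxw

end ForestDecomp
namespace ForestDecomp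

set_option linter.unusedSectionVars false

variable {V : Type*} [Fintype V] [DecidableEq V] {T : SimpleGraph V}

/-- Extend a path at its start until the start satisfies `P`. -/
lemma extend_start (hac : T.IsAcyclic) (s : Finset (Sym2 V))
    (hs : ∀ e ∈ s, e ∈ T.edgeSet) (P : V → Prop)
    (hext : ∀ v, ¬ P v → ((s.filter (fun e => v ∈ e))).card ≠ 1) :
    ∀ (m : ℕ) (u w : V) (q : T.Walk u w), Fintype.card V ≤ q.length + m →
      q.IsPath → 0 < q.length → (∀ e ∈ q.edges, e ∈ s) →
      (∀ x ∈ q.support, x ≠ u → x ≠ w → ¬ P x) →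
      ∃ (u' : V) (q' : T.Walk u' w), q'.IsPath ∧ 0 < q'.length ∧
        (∀ e ∈ q'.edges, e ∈ s) ∧ (∀ e ∈ q.edges, e ∈ q'.edges) ∧ P u' ∧
        (∀ x ∈ q'.support, x ≠ u' → x ≠ w → ¬ P x) := by
  intro m
  induction m with
  | zero =>
    intro u w q hm hq hl _ _
    exact absurd hq.length_lt (by omega)
  | succ m ih =>
    intro u w q hm hq hl hqs hint
    by_cases hPu : P u
    · exact ⟨u, q, hq, hl, hqs, fun e he => he, hPu, hint⟩
    cases q with
    | nil => simp at hl
    | @cons _ v1 _ h q'' =>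
      have he1 : s(u, v1) ∈ s := hqs _ (by simp)
      have hmemfil : s(u, v1) ∈ s.filter (fun e => u ∈ e) :=
        Finset.mem_filter.2 ⟨he1, by simp⟩
      have hcard : 1 < (s.filter (fun e => u ∈ e)).card := by
        have h0 : (s.filter (fun e => u ∈ e)).card ≠ 0 :=
          Finset.card_ne_zero_of_mem hmemfil
        have h1 := hext u hPu
        omega
      obtain ⟨e2, he2mem, he2ne⟩ := Finset.exists_mem_ne hcard s(u, v1)
      obtain ⟨hes, hue⟩ := Finset.mem_filter.1 he2mem
      obtain ⟨x, rfl⟩ := Sym2.mem_iff_exists.1 hue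
      have hadj : T.Adj u x := (T.mem_edgeSet).1 (hs _ hes)
      have hnotedge : s(u, x) ∉ (SimpleGraph.Walk.cons h q'').edges := fun hc =>
        he2ne (edge_eq_of_head h q'' hq hc (by simp))
      have hxsup : x ∉ (SimpleGraph.Walk.cons h q'').support := by
        intro hxs
        refine hac (SimpleGraph.Walk.cons hadj.symm
          ((SimpleGraph.Walk.cons h q'').takeUntil x hxs)) ?_
        refine SimpleGraph.Path.cons_isCycle ⟨_, hq.takeUntil hxs⟩ hadj.symm ?_
        intro hc
        rw [Sym2.eq_swap] at hc
        exact hnotedge ((SimpleGraph.Walk.cons h q'').edges_takeUntil_subset hxs hc)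
      have hq2 : (SimpleGraph.Walk.cons hadj.symm (SimpleGraph.Walk.cons h q'')).IsPath :=
        (SimpleGraph.Walk.cons_isPath_iff _ _).2 ⟨hq, hxsup⟩
      obtain ⟨u', q', hP1, hP2, hP3, hP4, hP5, hP6⟩ :=
        ih x w (SimpleGraph.Walk.cons hadj.symm (SimpleGraph.Walk.cons h q''))
          (by simp only [SimpleGraph.Walk.length_cons] at hm ⊢; omega)
          hq2 (by simp)
          (by
            intro e he
            rw [SimpleGraph.Walk.edges_cons, List.mem_cons] at he
            rcases he with rfl | he
            · rwa [Sym2.eq_swap]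
            · exact hqs _ he)
          (by
            intro y hy hyx hyw
            rw [SimpleGraph.Walk.support_cons, List.mem_cons] at hy
            rcases hy with rfl | hy
            · exact absurd rfl hyx
            by_cases hyu : y = u
            · exact hyu ▸ hPu
            · exact hint y hy hyu hyw)
      exact ⟨u', q', hP1, hP2, hP3,
        fun e he => hP4 _ (by rw [SimpleGraph.Walk.edges_cons]; exact List.mem_cons_of_mem _ he),
        hP5, hP6⟩

/-- From any edge of `s`, extract a maximal path with both endpoints satisfying `P`
and all internal vertices not satisfying `P`. -/
lemma exists_maxpath (hac : T.IsAcyclic) (s : Finset (Sym2 V))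
    (hs : ∀ e ∈ s, e ∈ T.edgeSet) (P : V → Prop)
    (hext : ∀ v, ¬ P v → ((s.filter (fun e => v ∈ e))).card ≠ 1)
    {a b : V} (hab : s(a, b) ∈ s) :
    ∃ (u w : V) (q : T.Walk u w), q.IsPath ∧ 0 < q.length ∧
      (∀ e ∈ q.edges, e ∈ s) ∧ s(a, b) ∈ q.edges ∧ P u ∧ P w ∧
      (∀ x ∈ q.support, x ≠ u → x ≠ w → ¬ P x) := by
  have hadj : T.Adj a b := (T.mem_edgeSet).1 (hs _ hab)
  have hq0 : (SimpleGraph.Walk.cons hadj SimpleGraph.Walk.nil).IsPath := by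
    simp [SimpleGraph.Walk.cons_isPath_iff, hadj.ne]
  obtain ⟨u', q1, h11, h12, h13, h14, h15, h16⟩ :=
    extend_start hac s hs P hext (Fintype.card V) a b
      (SimpleGraph.Walk.cons hadj SimpleGraph.Walk.nil) (by simp) hq0 (by simp)
      (by intro e he; simp at he; rwa [he])
      (by intro x hx hxa hxb; simp [SimpleGraph.Walk.support_cons] at hx; tauto)
  obtain ⟨w', q2, h21, h22, h23, h24, h25, h26⟩ :=
    extend_start hac s hs P hext (Fintype.card V) b u' q1.reverse
      (by rw [SimpleGraph.Walk.length_reverse]; omega)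
      h11.reverse (by rwa [SimpleGraph.Walk.length_reverse])
      (by intro e he; rw [SimpleGraph.Walk.edges_reverse, List.mem_reverse] at he; exact h13 e he)
      (by
        intro x hx hxb hxu
        rw [SimpleGraph.Walk.support_reverse, List.mem_reverse] at hx
        exact h16 x hx hxu hxb)
  refine ⟨w', u', q2, h21, h22, h23, ?_, h25, h15, h26⟩
  have : s(a, b) ∈ q1.reverse.edges := by
    rw [SimpleGraph.Walk.edges_reverse, List.mem_reverse]
    exact h14 _ (by simp)
  exact h24 _ this

end ForestDecomp
namespace ForestDecomp

variable {V : Type*} [Fintype V] [DecidableEq V] {T : SimpleGraph V}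

lemma degS_le_degree [DecidableRel T.Adj] (s : Finset (Sym2 V))
    (hs : ∀ e ∈ s, e ∈ T.edgeSet) (v : V) :
    (s.filter (fun e => v ∈ e)).card ≤ T.degree v := by
  rw [← SimpleGraph.card_incidenceFinset_eq_degree, SimpleGraph.incidenceFinset_eq_filter]
  apply Finset.card_le_card
  intro e he
  rw [Finset.mem_filter] at he ⊢
  exact ⟨SimpleGraph.mem_edgeFinset.2 (hs _ he.1), he.2⟩

lemma decomp [DecidableRel T.Adj] (hac : T.IsAcyclic) (C : Set V) [DecidablePred (· ∈ C)]
    (hdegT : ∀ v, v ∉ C → T.degree v = 2) :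
    ∀ (N : ℕ) (s : Finset (Sym2 V)), s.card ≤ N → (∀ e ∈ s, e ∈ T.edgeSet) →
      (∀ v, v ∉ C → (s.filter (fun e => v ∈ e)).card ≠ 1) →
      ∃ (n : ℕ) (p : Fin n → Σ u : V, Σ w : V, T.Walk u w),
        2 * n ≤ ∑ v ∈ Finset.univ.filter (· ∈ C), (s.filter (fun e => v ∈ e)).card ∧
        (∀ i, (p i).2.2.IsPath) ∧
        (∀ i, (p i).1 ∈ C ∧ (p i).2.1 ∈ C) ∧
        (∀ i, ∀ x ∈ (p i).2.2.support, x ≠ (p i).1 → x ≠ (p i).2.1 → x ∉ C) ∧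
        (∀ i j, i ≠ j → ∀ e, e ∈ (p i).2.2.edges → e ∉ (p j).2.2.edges) ∧
        (∀ e : Sym2 V, e ∈ s ↔ ∃ i, e ∈ (p i).2.2.edges) := by
  intro N
  induction N with
  | zero =>
    intro s hcard _ _
    have hs0 : s = ∅ := Finset.card_eq_zero.1 (Nat.le_zero.1 hcard)
    subst hs0
    exact ⟨0, Fin.elim0, by simp, fun i => i.elim0, fun i => i.elim0, fun i => i.elim0,
      fun i => i.elim0, by simp⟩
  | succ N ih =>
    intro s hcard hs hinv
    rcases s.eq_empty_or_nonempty with rfl | hne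
    · exact ⟨0, Fin.elim0, by simp, fun i => i.elim0, fun i => i.elim0, fun i => i.elim0,
        fun i => i.elim0, by simp⟩
    obtain ⟨a, b, hab⟩ : ∃ a b, s(a, b) ∈ s := by
      obtain ⟨e, he⟩ := hne
      induction e using Sym2.ind with
      | _ a b => exact ⟨a, b, he⟩
    obtain ⟨u, w, q, hq, hql, hqs, hqab, huC, hwC, hqint⟩ :=
      exists_maxpath hac s hs (· ∈ C) (fun v hv => hinv v hv) hab
    set E := q.edges.toFinset with hE
    have hEsub : E ⊆ s := fun e he => hqs e (List.mem_toFinset.1 he)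
    have huw : u ≠ w := by
      rintro rfl
      have hnil : (⟨q, hq⟩ : T.Path u u) = SimpleGraph.Path.nil := SimpleGraph.Path.loop_eq _
      have : q = SimpleGraph.Walk.nil := congrArg Subtype.val hnil
      rw [this] at hql; simp at hql
    have hfil : ∀ v : V, ((s \ E).filter (fun e => v ∈ e)).card
        = (s.filter (fun e => v ∈ e)).card - (E.filter (fun e => v ∈ e)).card
        ∧ (E.filter (fun e => v ∈ e)).card ≤ (s.filter (fun e => v ∈ e)).card := by
      intro v
      have h1 : (s \ E).filter (fun e => v ∈ e)
          = s.filter (fun e => v ∈ e) \ E.filter (fun e => v ∈ e) := by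
        ext e
        simp only [Finset.mem_filter, Finset.mem_sdiff]
        tauto
      have h2 : E.filter (fun e => v ∈ e) ⊆ s.filter (fun e => v ∈ e) :=
        Finset.filter_subset_filter _ hEsub
      exact ⟨by rw [h1, Finset.card_sdiff_of_subset h2], Finset.card_le_card h2⟩
    have hcard' : (s \ E).card ≤ N := by
      have h1 : (s \ E).card = s.card - E.card := Finset.card_sdiff_of_subset hEsub
      have h2 : 0 < E.card := Finset.card_pos.2 ⟨s(a, b), List.mem_toFinset.2 hqab⟩
      omega
    have hinv' : ∀ v, v ∉ C → ((s \ E).filter (fun e => v ∈ e)).card ≠ 1 := by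
      intro v hv
      obtain ⟨heq, hle⟩ := hfil v
      by_cases hvs : v ∈ q.support
      · have hvu : v ≠ u := fun h => hv (h ▸ huC)
        have hvw : v ≠ w := fun h => hv (h ▸ hwC)
        have hinc : (E.filter (fun e => v ∈ e)).card = 2 := inc_internal q hq hvs hvu hvw
        have hle2 : (s.filter (fun e => v ∈ e)).card ≤ 2 :=
          (degS_le_degree s hs v).trans_eq (hdegT v hv)
        omega
      · have hinc : (E.filter (fun e => v ∈ e)).card = 0 := inc_not_mem q hvs
        have := hinv v hv
        omega
    obtain ⟨n', p', hsum', hpath', hend', hint', hdisj', hcov'⟩ := ih (s \ E) hcard' 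
      (fun e he => hs e (Finset.mem_sdiff.1 he).1) hinv'
    -- sum bookkeeping
    have hsumkey : ∑ v ∈ Finset.univ.filter (· ∈ C), ((s \ E).filter (fun e => v ∈ e)).card + 2
        ≤ ∑ v ∈ Finset.univ.filter (· ∈ C), (s.filter (fun e => v ∈ e)).card := by
      have hsplit : ∀ v ∈ Finset.univ.filter (· ∈ C),
          (s.filter (fun e => v ∈ e)).card
          = ((s \ E).filter (fun e => v ∈ e)).card + (E.filter (fun e => v ∈ e)).card := by
        intro v _
        obtain ⟨heq, hle⟩ := hfil v
        omega
      rw [Finset.sum_congr rfl hsplit, Finset.sum_add_distrib]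
      have hpairsub : ({u, w} : Finset V) ⊆ Finset.univ.filter (· ∈ C) := by
        intro v hv
        rcases Finset.mem_insert.1 hv with rfl | hv
        · simpa using huC
        · rw [Finset.mem_singleton] at hv
          subst hv; simpa using hwC
      have hpair : 2 ≤ ∑ v ∈ Finset.univ.filter (· ∈ C), (E.filter (fun e => v ∈ e)).card := by
        have h1 : ∑ v ∈ ({u, w} : Finset V), (E.filter (fun e => v ∈ e)).card = 2 := by
          rw [Finset.sum_pair huw, inc_head q hq hql, inc_tail q hq hql]
        rw [← h1]
        exact Finset.sum_le_sum_of_subset hpairsub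
      omega
    refine ⟨n' + 1, Fin.cons ⟨u, w, q⟩ p', by omega, ?_, ?_, ?_, ?_, ?_⟩
    · intro i
      induction i using Fin.cases with
      | zero => exact hq
      | succ i' => exact hpath' i'
    · intro i
      induction i using Fin.cases with
      | zero => simpa using ⟨huC, hwC⟩
      | succ i' => exact hend' i'
    · intro i
      induction i using Fin.cases with
      | zero => exact hqint
      | succ i' => exact hint' i'
    · have hq_not_s' : ∀ e ∈ q.edges, e ∉ s \ E := by
        intro e he hmem
        exact (Finset.mem_sdiff.1 hmem).2 (List.mem_toFinset.2 he)
      have hp'_sub : ∀ j e, e ∈ (p' j).2.2.edges → e ∈ s \ E :=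
        fun j e he => (hcov' e).2 ⟨j, he⟩
      intro i j hij e hei
      rcases Fin.eq_zero_or_eq_succ i with rfl | ⟨i', rfl⟩
      · rcases Fin.eq_zero_or_eq_succ j with rfl | ⟨j', rfl⟩
        · exact absurd rfl hij
        · rw [Fin.cons_zero] at hei
          rw [Fin.cons_succ]
          exact fun hej => hq_not_s' e hei (hp'_sub j' e hej)
      · rcases Fin.eq_zero_or_eq_succ j with rfl | ⟨j', rfl⟩
        · rw [Fin.cons_succ] at hei
          rw [Fin.cons_zero]
          exact fun hej => hq_not_s' e hej (hp'_sub i' e hei)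
        · rw [Fin.cons_succ] at hei
          rw [Fin.cons_succ]
          exact hdisj' i' j' (fun h => hij (by rw [h])) e hei
    · intro e
      constructor
      · intro hes
        by_cases heq : e ∈ q.edges
        · exact ⟨0, heq⟩
        · have : e ∈ s \ E := Finset.mem_sdiff.2 ⟨hes, fun h => heq (List.mem_toFinset.1 h)⟩
          obtain ⟨j, hj⟩ := (hcov' e).1 this
          exact ⟨j.succ, hj⟩
      · rintro ⟨i, hi⟩
        rcases Fin.eq_zero_or_eq_succ i with rfl | ⟨i', rfl⟩
        · exact hqs e hi
        · have : e ∈ s \ E := (hcov' e).2 ⟨i', hi⟩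
          exact (Finset.mem_sdiff.1 this).1

end ForestDecomp
namespace ForestDecomp

variable {V : Type*} [Fintype V] [DecidableEq V] {T : SimpleGraph V}

lemma exists_leaf [DecidableRel T.Adj] (hac : T.IsAcyclic) {a b : V} (hadj : T.Adj a b) :
    ∃ u x, T.Adj u x ∧ T.degree u = 1 := by
  have hext : ∀ v, ¬ (T.degree v ≤ 1) →
      ((T.edgeFinset.filter (fun e => v ∈ e))).card ≠ 1 := by
    intro v hv
    rw [← SimpleGraph.incidenceFinset_eq_filter, SimpleGraph.card_incidenceFinset_eq_degree]
    omega
  obtain ⟨u, w, q, hq, hql, hqs, hqab, hPu, hPw, _⟩ :=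
    exists_maxpath hac T.edgeFinset (fun e he => SimpleGraph.mem_edgeFinset.1 he)
      (fun v => T.degree v ≤ 1) hext (SimpleGraph.mem_edgeFinset.2 ((T.mem_edgeSet).2 hadj))
  cases q with
  | nil => simp at hql
  | @cons _ v1 _ h q'' =>
    refine ⟨u, v1, h, ?_⟩
    have h1 : 0 < T.degree u := by
      rw [← SimpleGraph.card_neighborFinset_eq_degree]
      exact Finset.card_pos.2 ⟨v1, (SimpleGraph.mem_neighborFinset _ _ _).2 h⟩
    omega

lemma acyclic_card_le :
    ∀ (N : ℕ) (T : SimpleGraph V) (_inst : DecidableRel T.Adj),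
      T.IsAcyclic → T.edgeFinset.card ≤ N →
      T.edgeFinset.card ≤ (Finset.univ.filter fun v => 0 < T.degree v).card := by
  intro N
  induction N with
  | zero => intro T _ _ h; omega
  | succ N ih =>
    intro T inst hac hle
    rcases T.edgeFinset.eq_empty_or_nonempty with hemp | ⟨e, he⟩
    · simp [hemp]
    obtain ⟨a, b, hab⟩ : ∃ a b, T.Adj a b := by
      induction e using Sym2.ind with
      | _ a b => exact ⟨a, b, SimpleGraph.mem_edgeFinset.1 he⟩
    obtain ⟨u, x, hux, hdeg1⟩ := exists_leaf hac hab
    set T' := T.deleteEdges {s(u, x)} with hT'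
    haveI inst' : DecidableRel T'.Adj := fun a b => by
      rw [hT', SimpleGraph.deleteEdges_adj]; infer_instance
    have hle' : T' ≤ T := SimpleGraph.deleteEdges_le _
    have hnbr : ∀ v : V, T'.neighborFinset v ⊆ T.neighborFinset v := by
      intro v y hy
      rw [SimpleGraph.mem_neighborFinset] at hy ⊢
      exact hle' hy
    have hefin : T'.edgeFinset = T.edgeFinset \ {s(u, x)} := by
      ext f
      rw [Finset.mem_sdiff, SimpleGraph.mem_edgeFinset, SimpleGraph.mem_edgeFinset,
        hT', SimpleGraph.edgeSet_deleteEdges, Set.mem_diff]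
      simp
    have hmem : s(u, x) ∈ T.edgeFinset := SimpleGraph.mem_edgeFinset.2 ((T.mem_edgeSet).2 hux)
    have hcard' : T'.edgeFinset.card = T.edgeFinset.card - 1 := by
      rw [hefin, Finset.card_sdiff_of_subset (Finset.singleton_subset_iff.2 hmem), Finset.card_singleton]
    have hnbru : T.neighborFinset u = {x} := by
      have hcard1 : (T.neighborFinset u).card ≤ ({x} : Finset V).card := by
        rw [SimpleGraph.card_neighborFinset_eq_degree, hdeg1, Finset.card_singleton]
      exact (Finset.eq_of_subset_of_card_le
        (Finset.singleton_subset_iff.2 ((SimpleGraph.mem_neighborFinset _ _ _).2 hux)) hcard1).symm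
    have hdeg0 : T'.degree u = 0 := by
      rw [← SimpleGraph.card_neighborFinset_eq_degree, Finset.card_eq_zero,
        Finset.eq_empty_iff_forall_notMem]
      intro y hy
      rw [SimpleGraph.mem_neighborFinset, hT', SimpleGraph.deleteEdges_adj] at hy
      have : y = x := by
        have hyT : y ∈ T.neighborFinset u := (SimpleGraph.mem_neighborFinset _ _ _).2 hy.1
        rw [hnbru] at hyT; simpa using hyT
      exact hy.2 (by rw [this]; simp)
    have hsupsub : (Finset.univ.filter fun v => 0 < T'.degree v)
        ⊆ (Finset.univ.filter fun v => 0 < T.degree v) := by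
      intro v hv
      rw [Finset.mem_filter] at hv ⊢
      refine ⟨Finset.mem_univ _, lt_of_lt_of_le hv.2 ?_⟩
      rw [← SimpleGraph.card_neighborFinset_eq_degree, ← SimpleGraph.card_neighborFinset_eq_degree]
      exact Finset.card_le_card (hnbr v)
    have hssub : (Finset.univ.filter fun v => 0 < T'.degree v)
        ⊂ (Finset.univ.filter fun v => 0 < T.degree v) := by
      refine ⟨hsupsub, fun hcon => ?_⟩
      have hu1 : u ∈ Finset.univ.filter fun v => 0 < T.degree v := by
        rw [Finset.mem_filter]; exact ⟨Finset.mem_univ _, by omega⟩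
      have := hcon hu1
      rw [Finset.mem_filter, hdeg0] at this
      omega
    have hacyc' : T'.IsAcyclic := fun v c hc => hac (c.mapLe hle') (hc.mapLe hle')
    have hih := ih T' inst' hacyc' (by omega)
    have := Finset.card_lt_card hssub
    omega

end ForestDecomp

open ForestDecomp Finset

/-- The forest obtained from `G` by deleting a feedback edge set `F`. -/
def forestOf {V : Type*} (G : SimpleGraph V) (F : Finset (Sym2 V)) : SimpleGraph V :=
  G.deleteEdges ↑F

/-- The set `C`: endpoints of feedback edges together with the vertices of degree at
least 3 in the forest. -/
def branchSet {V : Type*} (G : SimpleGraph V) (F : Finset (Sym2 V)) : Set V :=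
  {v : V | ∃ e ∈ F, v ∈ e} ∪ {v : V | 3 ≤ ((forestOf G F).neighborSet v).ncard}

/-- If `G` has minimum degree at least 2 and feedback edge set `F` of size `k`, then
`|C| ≤ 4k` and the forest `T = (V, E(G) \ F)` decomposes into at most `4k`
edge-disjoint paths with endpoints in `C` whose internal vertices have degree 2 in
`T` and lie outside `C`. -/
theorem forest_decomposes_into_paths {V : Type*} [Fintype V] [DecidableEq V]
    (G : SimpleGraph V) (F : Finset (Sym2 V)) (k : ℕ)
    (hmin : ∀ v : V, 2 ≤ (G.neighborSet v).ncard)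
    (hF : ↑F ⊆ G.edgeSet) (hk : F.card = k)
    (hacyc : (forestOf G F).IsAcyclic) :
    (branchSet G F).ncard ≤ 4 * k ∧
    ∃ n : ℕ, n ≤ 4 * k ∧
      ∃ p : Fin n → Σ u : V, Σ w : V, (forestOf G F).Walk u w,
        (∀ i, (p i).2.2.IsPath) ∧
        (∀ i, (p i).1 ∈ branchSet G F ∧ (p i).2.1 ∈ branchSet G F) ∧
        (∀ i, ∀ x ∈ (p i).2.2.support, x ≠ (p i).1 → x ≠ (p i).2.1 →
          x ∉ branchSet G F ∧ ((forestOf G F).neighborSet x).ncard = 2) ∧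
        (∀ i j, i ≠ j → ∀ e, e ∈ (p i).2.2.edges → e ∉ (p j).2.2.edges) ∧
        (∀ e : Sym2 V, e ∈ (forestOf G F).edgeSet ↔ ∃ i, e ∈ (p i).2.2.edges) := by
  classical
  set T : SimpleGraph V := forestOf G F with hT
  haveI instT : DecidableRel T.Adj := Classical.decRel _
  haveI instG : DecidableRel G.Adj := Classical.decRel _
  -- ncard ↔ degree
  have hncard : ∀ v, (T.neighborSet v).ncard = T.degree v := by
    intro v
    rw [Set.ncard_eq_toFinset_card', Set.toFinset_card, SimpleGraph.card_neighborSet_eq_degree]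
  have hncardG : ∀ v, (G.neighborSet v).ncard = G.degree v := by
    intro v
    rw [Set.ncard_eq_toFinset_card', Set.toFinset_card, SimpleGraph.card_neighborSet_eq_degree]
  -- the weight of a vertex: number of incident feedback edges
  set wt : V → ℕ := fun v => (F.filter (fun e => v ∈ e)).card with hwt
  -- G-degree vs T-degree
  have hGT : ∀ v, G.degree v ≤ T.degree v + wt v := by
    intro v
    have hsub : G.neighborFinset v ⊆
        T.neighborFinset v ∪ (G.neighborFinset v).filter (fun y => s(v, y) ∈ F) := by
      intro y hy
      rw [SimpleGraph.mem_neighborFinset] at hy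
      by_cases hf : s(v, y) ∈ F
      · exact Finset.mem_union_right _ (Finset.mem_filter.2
          ⟨(SimpleGraph.mem_neighborFinset _ _ _).2 hy, hf⟩)
      · refine Finset.mem_union_left _ ((SimpleGraph.mem_neighborFinset _ _ _).2 ?_)
        rw [hT]
        exact SimpleGraph.deleteEdges_adj.2 ⟨hy, by simpa using hf⟩
    have hinj : ((G.neighborFinset v).filter (fun y => s(v, y) ∈ F)).card ≤ wt v := by
      apply Finset.card_le_card_of_injOn (fun y => s(v, y))
      · intro y hy
        rw [Finset.mem_coe, Finset.mem_filter] at hy ⊢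
        exact ⟨hy.2, by simp⟩
      · intro y1 _ y2 _ hxy
        exact Sym2.congr_right.1 hxy
    calc G.degree v = (G.neighborFinset v).card := (SimpleGraph.card_neighborFinset_eq_degree _ _).symm
      _ ≤ (T.neighborFinset v ∪ (G.neighborFinset v).filter (fun y => s(v, y) ∈ F)).card :=
          Finset.card_le_card hsub
      _ ≤ (T.neighborFinset v).card + ((G.neighborFinset v).filter (fun y => s(v, y) ∈ F)).card :=
          Finset.card_union_le _ _
      _ ≤ T.degree v + wt v := by
          rw [SimpleGraph.card_neighborFinset_eq_degree]; omega
  have hwv : ∀ v, 2 ≤ T.degree v + wt v := by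
    intro v
    have h1 := hmin v
    rw [hncardG] at h1
    exact h1.trans (hGT v)
  -- total weight
  have hWsum : ∑ v, wt v = 2 * k := by
    have h1 : ∀ v, wt v = ∑ e ∈ F, if v ∈ e then 1 else 0 := by
      intro v; exact Finset.card_filter _ _
    calc ∑ v, wt v = ∑ v, ∑ e ∈ F, if v ∈ e then 1 else 0 := by
          exact Finset.sum_congr rfl (fun v _ => h1 v)
      _ = ∑ e ∈ F, ∑ v, if v ∈ e then 1 else 0 := Finset.sum_comm
      _ = ∑ e ∈ F, (univ.filter (fun v => v ∈ e)).card := by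
          refine Finset.sum_congr rfl (fun e _ => ?_)
          rw [Finset.card_filter]
      _ = ∑ e ∈ F, 2 := by
          refine Finset.sum_congr rfl (fun e he => ?_)
          have hediag : ¬ e.IsDiag := G.not_isDiag_of_mem_edgeSet (hF he)
          induction e using Sym2.ind with
          | _ a b =>
            have hab : a ≠ b := by simpa using hediag
            have : univ.filter (fun v => v ∈ s(a, b)) = {a, b} := by
              ext v
              simp [Sym2.mem_iff]
            rw [this, Finset.card_insert_of_notMem (by simpa using hab), Finset.card_singleton]
      _ = 2 * k := by rw [Finset.sum_const, smul_eq_mul, ← hk, Nat.mul_comm]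
  -- the finsets
  set FEf : Finset V := univ.filter (fun v => ∃ e ∈ F, v ∈ e) with hFEf
  set Bf : Finset V := univ.filter (fun v => 3 ≤ T.degree v) with hBf
  set Lf : Finset V := univ.filter (fun v => T.degree v = 1) with hLf
  set If : Finset V := univ.filter (fun v => T.degree v = 0) with hIf
  set D2f : Finset V := univ.filter (fun v => T.degree v = 2) with hD2f
  set Qf : Finset V := FEf.filter (fun v => T.degree v = 2) with hQf
  set Cf : Finset V := univ.filter (fun v => v ∈ branchSet G F) with hCf
  have hmemC : ∀ v, v ∈ branchSet G F ↔ (∃ e ∈ F, v ∈ e) ∨ 3 ≤ T.degree v := by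
    intro v
    rw [branchSet, Set.mem_union, Set.mem_setOf_eq, Set.mem_setOf_eq, ← hT, hncard]
  have hCfeq : Cf = FEf ∪ Bf := by
    ext v
    simp only [hCf, hFEf, hBf, Finset.mem_union, Finset.mem_filter, Finset.mem_univ, true_and]
    rw [hmemC]
  -- partition helper
  have hcover : If ∪ Lf ∪ D2f ∪ Bf = univ := by
    ext v
    simp only [hIf, hLf, hD2f, hBf, Finset.mem_union, Finset.mem_filter, Finset.mem_univ,
      true_and, iff_true]
    omega
  have d1 : Disjoint If Lf := by
    rw [Finset.disjoint_left]
    intro a h1 h2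
    simp only [hIf, hLf, Finset.mem_filter, Finset.mem_univ, true_and] at h1 h2
    omega
  have d2 : Disjoint (If ∪ Lf) D2f := by
    rw [Finset.disjoint_left]
    intro a h1 h2
    simp only [hIf, hLf, hD2f, Finset.mem_union, Finset.mem_filter, Finset.mem_univ,
      true_and] at h1 h2
    omega
  have d3 : Disjoint (If ∪ Lf ∪ D2f) Bf := by
    rw [Finset.disjoint_left]
    intro a h1 h2
    simp only [hIf, hLf, hD2f, hBf, Finset.mem_union, Finset.mem_filter, Finset.mem_univ,
      true_and] at h1 h2
    omega
  have hsplit : ∀ f : V → ℕ,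
      ∑ v, f v = ∑ v ∈ If, f v + ∑ v ∈ Lf, f v + ∑ v ∈ D2f, f v + ∑ v ∈ Bf, f v := by
    intro f
    rw [← hcover, Finset.sum_union d3, Finset.sum_union d2, Finset.sum_union d1]
  -- degree sums
  have hIsum : ∑ v ∈ If, T.degree v = 0 := by
    apply Finset.sum_eq_zero
    intro v hv
    rw [hIf, Finset.mem_filter] at hv
    exact hv.2
  have hLsum : ∑ v ∈ Lf, T.degree v = Lf.card := by
    rw [Finset.card_eq_sum_ones]
    apply Finset.sum_congr rfl
    intro v hv
    rw [hLf, Finset.mem_filter] at hv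
    exact hv.2
  have hDsum : ∑ v ∈ D2f, T.degree v = 2 * D2f.card := by
    rw [mul_comm 2, ← smul_eq_mul, ← Finset.sum_const]
    apply Finset.sum_congr rfl
    intro v hv
    rw [hD2f, Finset.mem_filter] at hv
    exact hv.2
  -- edge bound
  have hedge : T.edgeFinset.card ≤ (univ.filter (fun v => 0 < T.degree v)).card :=
    acyclic_card_le T.edgeFinset.card T instT hacyc le_rfl
  have hsuppcard : (univ.filter (fun v => 0 < T.degree v)).card
      = Lf.card + D2f.card + Bf.card := by
    have := hsplit (fun v => if 0 < T.degree v then 1 else 0)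
    rw [← Finset.card_filter] at this
    have z0 : ∑ v ∈ If, (if 0 < T.degree v then 1 else 0) = 0 := by
      apply Finset.sum_eq_zero; intro v hv
      rw [hIf, Finset.mem_filter] at hv; simp [hv.2]
    have z1 : ∑ v ∈ Lf, (if 0 < T.degree v then 1 else 0) = Lf.card := by
      rw [Finset.card_eq_sum_ones]; apply Finset.sum_congr rfl; intro v hv
      rw [hLf, Finset.mem_filter] at hv; simp [hv.2]
    have z2 : ∑ v ∈ D2f, (if 0 < T.degree v then 1 else 0) = D2f.card := by
      rw [Finset.card_eq_sum_ones]; apply Finset.sum_congr rfl; intro v hv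
      rw [hD2f, Finset.mem_filter] at hv; simp [hv.2]
    have z3 : ∑ v ∈ Bf, (if 0 < T.degree v then 1 else 0) = Bf.card := by
      rw [Finset.card_eq_sum_ones]; apply Finset.sum_congr rfl; intro v hv
      rw [hBf, Finset.mem_filter] at hv
      have : 0 < T.degree v := by omega
      simp [this]
    omega
  have hdegtotal := hsplit (fun v => T.degree v)
  have htwice : ∑ v, T.degree v = 2 * T.edgeFinset.card :=
    SimpleGraph.sum_degrees_eq_twice_card_edges T
  have h2 : ∑ v ∈ Bf, T.degree v ≤ Lf.card + 2 * Bf.card := by omega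
  have hB3 : 3 * Bf.card ≤ ∑ v ∈ Bf, T.degree v := by
    rw [mul_comm 3, ← smul_eq_mul]
    apply Finset.card_nsmul_le_sum
    intro v hv
    rw [hBf, Finset.mem_filter] at hv
    exact hv.2
  have hBL : Bf.card ≤ Lf.card := by omega
  -- weight bounds
  have hwL : ∀ v ∈ Lf, 1 ≤ wt v := by
    intro v hv
    rw [hLf, Finset.mem_filter] at hv
    have := hwv v
    omega
  have hwI : ∀ v ∈ If, 2 ≤ wt v := by
    intro v hv
    rw [hIf, Finset.mem_filter] at hv
    have := hwv v
    omega
  have hwQ : ∀ v ∈ Qf, 1 ≤ wt v := by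
    intro v hv
    rw [hQf, Finset.mem_filter, hFEf, Finset.mem_filter] at hv
    obtain ⟨⟨_, e, he, hve⟩, _⟩ := hv
    exact Finset.card_pos.2 ⟨e, Finset.mem_filter.2 ⟨he, hve⟩⟩
  have hwFE : ∀ v ∈ FEf, 1 ≤ wt v := by
    intro v hv
    rw [hFEf, Finset.mem_filter] at hv
    obtain ⟨_, e, he, hve⟩ := hv
    exact Finset.card_pos.2 ⟨e, Finset.mem_filter.2 ⟨he, hve⟩⟩
  -- key inequality: L + 2I + Q ≤ 2k
  have hdisj1 : Disjoint Lf If := by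
    rw [Finset.disjoint_left]
    intro v hv hv'
    rw [hLf, Finset.mem_filter] at hv
    rw [hIf, Finset.mem_filter] at hv'
    omega
  have hdisj2 : Disjoint (Lf ∪ If) Qf := by
    rw [Finset.disjoint_left]
    intro v hv hv'
    rw [hQf, Finset.mem_filter] at hv'
    rcases Finset.mem_union.1 hv with h | h
    · rw [hLf, Finset.mem_filter] at h; omega
    · rw [hIf, Finset.mem_filter] at h; omega
  have hLIQ : Lf.card + 2 * If.card + Qf.card ≤ 2 * k := by
    have hsub : (Lf ∪ If) ∪ Qf ⊆ univ := Finset.subset_univ _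
    have hle1 : ∑ v ∈ (Lf ∪ If) ∪ Qf, wt v ≤ ∑ v, wt v :=
      Finset.sum_le_sum_of_subset hsub
    rw [Finset.sum_union hdisj2, Finset.sum_union hdisj1, hWsum] at hle1
    have hc1 : Lf.card ≤ ∑ v ∈ Lf, wt v := by
      rw [Finset.card_eq_sum_ones]; exact Finset.sum_le_sum hwL
    have hc2 : 2 * If.card ≤ ∑ v ∈ If, wt v := by
      rw [mul_comm 2, ← smul_eq_mul]
      exact Finset.card_nsmul_le_sum _ _ _ hwI
    have hc3 : Qf.card ≤ ∑ v ∈ Qf, wt v := by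
      rw [Finset.card_eq_sum_ones]; exact Finset.sum_le_sum hwQ
    omega
  have hFEcard : FEf.card ≤ 2 * k := by
    have hle1 : ∑ v ∈ FEf, wt v ≤ ∑ v, wt v := Finset.sum_le_sum_of_subset (Finset.subset_univ _)
    have hc1 : FEf.card ≤ ∑ v ∈ FEf, wt v := by
      rw [Finset.card_eq_sum_ones]; exact Finset.sum_le_sum hwFE
    omega
  -- |C| ≤ 4k
  have hCcard : Cf.card ≤ 4 * k := by
    have h1 : Cf.card ≤ FEf.card + Bf.card := hCfeq ▸ Finset.card_union_le _ _
    omega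
  have hCcoe : (↑Cf : Set V) = branchSet G F := by
    ext v
    rw [hCf]
    simp
  -- Φ bound
  have hPhi : ∑ v ∈ Cf, T.degree v ≤ 8 * k := by
    have hunion : Cf = (FEf \ Bf) ∪ Bf := by
      rw [hCfeq, Finset.sdiff_union_self_eq_union]
    have hsum1 : ∑ v ∈ Cf, T.degree v
        = ∑ v ∈ FEf \ Bf, T.degree v + ∑ v ∈ Bf, T.degree v := by
      rw [hunion, Finset.sum_union Finset.sdiff_disjoint]
    have hpt : ∀ v ∈ FEf \ Bf, T.degree v
        ≤ (if T.degree v = 1 then 1 else 0) + 2 * (if T.degree v = 2 then 1 else 0) := by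
      intro v hv
      have hvB : ¬ 3 ≤ T.degree v := by
        intro h
        exact (Finset.mem_sdiff.1 hv).2 (by rw [hBf]; exact Finset.mem_filter.2 ⟨Finset.mem_univ _, h⟩)
      by_cases h1 : T.degree v = 1
      · simp [h1]
      by_cases h2 : T.degree v = 2
      · simp [h2, h1]
      · have : T.degree v = 0 := by omega
        simp [this]
    have hsum2 : ∑ v ∈ FEf \ Bf, T.degree v
        ≤ ((FEf \ Bf).filter (fun v => T.degree v = 1)).card
          + 2 * ((FEf \ Bf).filter (fun v => T.degree v = 2)).card := by
      calc ∑ v ∈ FEf \ Bf, T.degree v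
          ≤ ∑ v ∈ FEf \ Bf, ((if T.degree v = 1 then 1 else 0)
            + 2 * (if T.degree v = 2 then 1 else 0)) := Finset.sum_le_sum hpt
        _ = ∑ v ∈ FEf \ Bf, (if T.degree v = 1 then 1 else 0)
            + 2 * ∑ v ∈ FEf \ Bf, (if T.degree v = 2 then 1 else 0) := by
            rw [Finset.sum_add_distrib, Finset.mul_sum]
        _ = ((FEf \ Bf).filter (fun v => T.degree v = 1)).card
            + 2 * ((FEf \ Bf).filter (fun v => T.degree v = 2)).card := by
            rw [Finset.card_filter, Finset.card_filter]
    have hss1 : ((FEf \ Bf).filter (fun v => T.degree v = 1)).card ≤ Lf.card := by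
      apply Finset.card_le_card
      intro v hv
      rw [Finset.mem_filter] at hv
      rw [hLf, Finset.mem_filter]
      exact ⟨Finset.mem_univ _, hv.2⟩
    have hss2 : ((FEf \ Bf).filter (fun v => T.degree v = 2)).card ≤ Qf.card := by
      apply Finset.card_le_card
      intro v hv
      rw [Finset.mem_filter, Finset.mem_sdiff] at hv
      rw [hQf, Finset.mem_filter]
      exact ⟨hv.1.1, hv.2⟩
    omega
  -- degree of non-branch vertices
  have hdegT : ∀ v, v ∉ branchSet G F → T.degree v = 2 := by
    intro v hv
    rw [hmemC] at hv
    push_neg at hv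
    have hw0 : wt v = 0 := by
      show (F.filter (fun e => v ∈ e)).card = 0
      rw [Finset.card_eq_zero, Finset.eq_empty_iff_forall_notMem]
      intro e he
      rw [Finset.mem_filter] at he
      exact hv.1 e he.1 he.2
    have := hwv v
    have h3 := hv.2
    omega
  haveI : DecidablePred (· ∈ branchSet G F) := Classical.decPred _
  obtain ⟨n, p, hsum, hpath, hend, hint, hdisj, hcov⟩ :=
    decomp (T := T) hacyc (branchSet G F) (fun v hv => hdegT v hv) T.edgeFinset.card
      T.edgeFinset le_rfl (fun e he => SimpleGraph.mem_edgeFinset.1 he)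
      (by
        intro v hv
        rw [← SimpleGraph.incidenceFinset_eq_filter, SimpleGraph.card_incidenceFinset_eq_degree,
          hdegT v hv]
        omega)
  have hsum2 : 2 * n ≤ 8 * k := by
    refine le_trans hsum (le_trans (le_of_eq ?_) hPhi)
    refine Finset.sum_congr ?_ ?_
    · ext v
      simp only [hCf, Finset.mem_filter]
    · intro v _
      rw [← SimpleGraph.incidenceFinset_eq_filter, SimpleGraph.card_incidenceFinset_eq_degree]
  refine ⟨by rw [← hCcoe, Set.ncard_coe_finset]; exact hCcard, n, by omega, p, hpath, hend,
    ?_, hdisj, ?_⟩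
  · intro i x hx hx1 hx2
    have hxC := hint i x hx hx1 hx2
    exact ⟨hxC, by rw [hncard]; exact hdegT x hxC⟩
  · intro e
    rw [← SimpleGraph.mem_edgeFinset]
    exact hcov e
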